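/- Anti-windup finite-gain ℓ∞ stability of the saturated closed loop: Under the hypotheses of the augmented anti-windup closed loop (A, B, horizon T, delay τ, levels 0 = η_0 ≤ … ≤ η_N, each (R^i, M^i) satisfying the SLS feasibility conditions for (A,B), input-safety bound Σ_i (η_i − η_{i−1})‖[M^i_T ⋯ M^i_1]‖ ≤ u_max, plant x_t = A x_{t−1} + B P_{u_max}(u_{t−1}) + w_t with the augmented system-level controller, saturation projections), assume additionally ‖A^{τ+1}‖ < 1 for the induced ℓ∞→ℓ∞ matrix norm. Then for every disturbance w with sup_t |w_t| < ∞, the internal state satisfies sup_t |ŵ_t| ≤ (1/(1 − ‖A^{τ+1}‖))·sup_t |w_t|, and the state trajectory satisfies the affine bound sup_t |x_t| ≤ Σ_{i=1}^N (η_i − η_{i−1}) ‖[R^i_T ⋯ R^i_1]‖ + (Σ_{k=0}^{τ} ‖A^k‖)·(1/(1 − ‖A^{τ+1}‖))·sup_t |w_t|; in particular the saturated closed loop is finite-gain ℓ∞-stable with respect to w. -/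

import Mathlib

/-- Scalar saturation at level `η`: `sat(a,η) = sign(a)·min(|a|,η)`. -/
noncomputable def satScalar (η a : ℝ) : ℝ := Real.sign a * min |a| η

/-- Coordinatewise saturation projection (sup norm). -/
noncomputable def satProj {n : ℕ} (η : ℝ) (w : Fin n → ℝ) : Fin n → ℝ :=
  fun i => satScalar η (w i)

/-- Induced ℓ∞→ℓ∞ matrix norm (maximum absolute row sum). -/
noncomputable def linftyNorm {n m : ℕ} (A : Matrix (Fin n) (Fin m) ℝ) : ℝ :=
  ⨆ i : Fin n, ∑ j : Fin m, |A i j|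

/-- Induced ℓ∞→ℓ∞ norm (maximum absolute row sum) of the row-wise
concatenation `[M_T M_{T-1} ⋯ M_1]`. -/
noncomputable def concatNorm {p n : ℕ} (T : ℕ) (M : ℕ → Matrix (Fin p) (Fin n) ℝ) : ℝ :=
  ⨆ r : Fin p, ∑ k ∈ Finset.Icc 1 T, ∑ j : Fin n, |M k r j|

/-- SLS feasibility conditions for `(A, B)` with horizon `T`. -/
def SLSFeasible {n m : ℕ} (A : Matrix (Fin n) (Fin n) ℝ) (B : Matrix (Fin n) (Fin m) ℝ)
    (T : ℕ) (R : ℕ → Matrix (Fin n) (Fin n) ℝ) (M : ℕ → Matrix (Fin m) (Fin n) ℝ) : Prop :=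
  R 1 = 1 ∧
  (∀ k : ℕ, 1 ≤ k → k + 1 ≤ T → R (k + 1) = A * R k + B * M k) ∧
  A * R T + B * M T = 0

/-- The blended (input) component map. -/
noncomputable def blendOut {p n : ℕ} (Mm : ℕ → ℕ → Matrix (Fin p) (Fin n) ℝ)
    (η : ℕ → ℝ) (N T : ℕ) (h : ℕ → Fin n → ℝ) (t : ℕ) : Fin p → ℝ :=
  ∑ i ∈ Finset.Icc 1 N, ∑ k ∈ Finset.Icc 1 (min (t + 1) T),
    (Mm i k).mulVec (satProj (η i) (h (t + 1 - k)) - satProj (η (i - 1)) (h (t + 1 - k)))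

/-- The augmented (anti-windup) state component map. -/
noncomputable def augXmap {n : ℕ} (R : ℕ → ℕ → Matrix (Fin n) (Fin n) ℝ)
    (A : Matrix (Fin n) (Fin n) ℝ) (η : ℕ → ℝ) (N T τ : ℕ)
    (h : ℕ → Fin n → ℝ) (t : ℕ) : Fin n → ℝ :=
  blendOut R η N T h t +
  ∑ k ∈ Finset.Icc 1 (min (τ + 1) (t + 1)),
    (A ^ (k - 1)).mulVec (h (t + 1 - k) - satProj (η N) (h (t + 1 - k)))


open Finset Matrix

lemma aw_sign_mul_abs (x : ℝ) : Real.sign x * |x| = x := by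
  rcases lt_trichotomy x 0 with h|h|h
  · rw [Real.sign_of_neg h, abs_of_neg h]; ring
  · simp [h]
  · rw [Real.sign_of_pos h, abs_of_pos h]; ring

lemma aw_abs_sign_le (a : ℝ) : |Real.sign a| ≤ 1 := by
  rcases lt_trichotomy a 0 with h|h|h
  · rw [Real.sign_of_neg h]; norm_num
  · rw [h, Real.sign_zero]; norm_num
  · rw [Real.sign_of_pos h]; norm_num

lemma aw_sat_zero (η : ℝ) : satScalar η 0 = 0 := by simp [satScalar]

lemma aw_sat_level_zero (a : ℝ) : satScalar 0 a = 0 := by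
  simp [satScalar, min_eq_right (abs_nonneg a)]

lemma aw_sat_of_le {η a : ℝ} (h : |a| ≤ η) : satScalar η a = a := by
  unfold satScalar; rw [min_eq_left h, aw_sign_mul_abs]

lemma aw_abs_sat_sub_sat {η₁ η₂ : ℝ} (h1 : 0 ≤ η₁) (h12 : η₁ ≤ η₂) (a : ℝ) :
    |satScalar η₂ a - satScalar η₁ a| ≤ η₂ - η₁ := by
  unfold satScalar
  rw [← mul_sub, abs_mul]
  have h3 : min |a| η₁ ≤ min |a| η₂ := min_le_min le_rfl h12
  have habs : |min |a| η₂ - min |a| η₁| ≤ η₂ - η₁ := by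
    rw [abs_of_nonneg (sub_nonneg.2 h3)]
    rcases le_total |a| η₁ with h|h
    · rw [min_eq_left (h.trans h12), min_eq_left h]; linarith
    · rw [min_eq_right h]
      have := min_le_right |a| η₂
      linarith
  calc |Real.sign a| * |min |a| η₂ - min |a| η₁| ≤ 1 * (η₂ - η₁) :=
        mul_le_mul (aw_abs_sign_le a) habs (abs_nonneg _) one_pos.le
    _ = η₂ - η₁ := one_mul _

lemma aw_abs_sub_sat {η : ℝ} (hη : 0 ≤ η) (a : ℝ) : |a - satScalar η a| ≤ |a| := by
  rcases le_total |a| η with h|h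
  · rw [aw_sat_of_le h]; simp [abs_nonneg]
  · unfold satScalar
    rw [min_eq_right h]
    rcases lt_trichotomy a 0 with ha|ha|ha
    · rw [Real.sign_of_neg ha]
      rw [abs_of_neg ha] at h ⊢
      rw [abs_of_nonpos (by linarith)]
      linarith
    · simp [ha]
    · rw [Real.sign_of_pos ha]
      rw [abs_of_pos ha] at h ⊢
      rw [abs_of_nonneg (by linarith)]
      linarith

lemma aw_satProj_zero {n : ℕ} (η : ℝ) : satProj η (0 : Fin n → ℝ) = 0 := by
  funext j; simp [satProj, aw_sat_zero]

lemma aw_satProj_level_zero {n : ℕ} (v : Fin n → ℝ) : satProj 0 v = 0 := by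
  funext j; simp [satProj, aw_sat_level_zero]

lemma aw_rowsum_le {n p : ℕ} (A : Matrix (Fin n) (Fin p) ℝ) (i : Fin n) :
    ∑ j, |A i j| ≤ linftyNorm A := by
  unfold linftyNorm
  exact le_ciSup (Set.finite_range fun i : Fin n => ∑ j, |A i j|).bddAbove i

lemma aw_linftyNorm_nonneg {n p : ℕ} (A : Matrix (Fin n) (Fin p) ℝ) : 0 ≤ linftyNorm A :=
  Real.iSup_nonneg fun i => Finset.sum_nonneg fun j _ => abs_nonneg _

lemma aw_concat_rowsum_le {p n : ℕ} (T : ℕ) (M : ℕ → Matrix (Fin p) (Fin n) ℝ) (r : Fin p) :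
    ∑ k ∈ Icc 1 T, ∑ j, |M k r j| ≤ concatNorm T M := by
  unfold concatNorm
  exact le_ciSup (Set.finite_range fun r : Fin p => ∑ k ∈ Icc 1 T, ∑ j, |M k r j|).bddAbove r

lemma aw_concatNorm_nonneg {p n : ℕ} (T : ℕ) (M : ℕ → Matrix (Fin p) (Fin n) ℝ) :
    0 ≤ concatNorm T M :=
  Real.iSup_nonneg fun r => Finset.sum_nonneg fun k _ =>
    Finset.sum_nonneg fun j _ => abs_nonneg _

lemma aw_mulVec_coord_le {p q : ℕ} (A : Matrix (Fin p) (Fin q) ℝ) (v : Fin q → ℝ) (c : ℝ)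
    (hv : ∀ j, |v j| ≤ c) (r : Fin p) : |A.mulVec v r| ≤ (∑ j, |A r j|) * c := by
  have h0 : A.mulVec v r = ∑ j, A r j * v j := by simp [Matrix.mulVec, dotProduct]
  rw [h0, Finset.sum_mul]
  refine (Finset.abs_sum_le_sum_abs _ _).trans (Finset.sum_le_sum fun j _ => ?_)
  rw [abs_mul]
  exact mul_le_mul_of_nonneg_left (hv j) (abs_nonneg _)

lemma aw_norm_mulVec_le {p q : ℕ} (A : Matrix (Fin p) (Fin q) ℝ) (v : Fin q → ℝ) :
    ‖A.mulVec v‖ ≤ linftyNorm A * ‖v‖ := by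
  refine (pi_norm_le_iff_of_nonneg
    (mul_nonneg (aw_linftyNorm_nonneg A) (norm_nonneg v))).2 fun r => ?_
  rw [Real.norm_eq_abs]
  refine (aw_mulVec_coord_le A v ‖v‖ (fun j => ?_) r).trans ?_
  · rw [← Real.norm_eq_abs]; exact norm_le_pi_norm v j
  · exact mul_le_mul_of_nonneg_right (aw_rowsum_le A r) (norm_nonneg v)

lemma aw_telescope {G : Type*} [AddCommGroup G] (f : ℕ → G) (N : ℕ) :
    ∑ i ∈ Icc 1 N, (f i - f (i - 1)) = f N - f 0 := by
  induction N with
  | zero => simp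
  | succ N ih =>
    rw [Finset.sum_Icc_succ_top (by omega), ih]
    simp only [Nat.add_sub_cancel]
    abel

lemma aw_shift_sum {G : Type*} [AddCommMonoid G] (a b : ℕ) (f : ℕ → G) :
    ∑ k ∈ Icc (a + 1) (b + 1), f k = ∑ k ∈ Icc a b, f (k + 1) := by
  rw [← Finset.map_add_right_Icc, Finset.sum_map]
  simp [addRightEmbedding]

lemma aw_insert_Icc (K : ℕ) (hK : 1 ≤ K) : Icc 1 K = insert 1 (Icc 2 K) := by
  ext k; simp only [Finset.mem_Icc, Finset.mem_insert]; omega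

lemma aw_mulVec_finsum {p q : ℕ} (A : Matrix (Fin p) (Fin q) ℝ) (s : Finset ℕ)
    (f : ℕ → Fin q → ℝ) : A.mulVec (∑ k ∈ s, f k) = ∑ k ∈ s, A.mulVec (f k) :=
  map_sum A.mulVecLin f s

lemma aw_shift_sum1 {G : Type*} [AddCommMonoid G] (K : ℕ) (hK : 1 ≤ K) (f : ℕ → G) :
    ∑ k ∈ Finset.Icc 2 K, f k = ∑ k ∈ Finset.Icc 1 (K - 1), f (k + 1) := by
  have h : Finset.Icc 2 K = Finset.Icc (1 + 1) ((K - 1) + 1) := by congr 1 <;> omega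
  rw [h, aw_shift_sum]

lemma aw_keyR {n m : ℕ} (A : Matrix (Fin n) (Fin n) ℝ) (B : Matrix (Fin n) (Fin m) ℝ)
    (T : ℕ) (hT : 1 ≤ T) (R : ℕ → Matrix (Fin n) (Fin n) ℝ)
    (M : ℕ → Matrix (Fin m) (Fin n) ℝ)
    (h1 : R 1 = 1) (hmid : ∀ k, 1 ≤ k → k + 1 ≤ T → R (k + 1) = A * R k + B * M k)
    (hlast : A * R T + B * M T = 0) (t : ℕ) (v : ℕ → Fin n → ℝ) :
    A.mulVec (v t) + A.mulVec (∑ k ∈ Finset.Icc 2 (min (t + 1) T), (R k).mulVec (v (t + 1 - k)))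
      + B.mulVec (∑ k ∈ Finset.Icc 1 (min (t + 1) T), (M k).mulVec (v (t + 1 - k)))
    = ∑ k ∈ Finset.Icc 2 (min (t + 2) T), (R k).mulVec (v (t + 2 - k)) := by
  have hgen : A.mulVec (v t)
      + A.mulVec (∑ k ∈ Finset.Icc 2 (min (t + 1) T), (R k).mulVec (v (t + 1 - k)))
      + B.mulVec (∑ k ∈ Finset.Icc 1 (min (t + 1) T), (M k).mulVec (v (t + 1 - k)))
      = ∑ k ∈ Finset.Icc 1 (min (t + 1) T), (A * R k + B * M k).mulVec (v (t + 1 - k)) := by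
    rw [aw_mulVec_finsum, aw_mulVec_finsum]
    simp only [Matrix.mulVec_mulVec]
    rw [aw_insert_Icc (min (t + 1) T) (by omega)]
    simp only [Matrix.add_mulVec, Finset.sum_add_distrib,
      Finset.sum_insert (show (1 : ℕ) ∉ Finset.Icc 2 (min (t + 1) T) by simp)]
    have e1 : (A * R 1).mulVec (v (t + 1 - 1)) = A.mulVec (v t) := by
      rw [h1, mul_one]; norm_num
    rw [e1]
    abel
  rw [hgen]
  rcases le_or_gt T (t + 1) with hc | hc
  · have hm1 : min (t + 1) T = T := min_eq_right hc
    have hm2 : min (t + 2) T = T := min_eq_right (by omega)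
    rw [hm1, hm2]
    have e5 : ∑ k ∈ Finset.Icc 1 T, (A * R k + B * M k).mulVec (v (t + 1 - k))
        = (∑ k ∈ Finset.Icc 1 (T - 1), (A * R k + B * M k).mulVec (v (t + 1 - k)))
          + (A * R T + B * M T).mulVec (v (t + 1 - T)) := by
      conv_lhs => rw [show T = (T - 1) + 1 from by omega]
      rw [Finset.sum_Icc_succ_top (by omega), show (T - 1) + 1 = T from by omega]
    rw [e5, hlast, Matrix.zero_mulVec, add_zero, aw_shift_sum1 T hT]
    refine Finset.sum_congr rfl fun k hk => ?_
    rw [Finset.mem_Icc] at hk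
    rw [show t + 2 - (k + 1) = t + 1 - k from by omega, ← hmid k (by omega) (by omega)]
  · have hm1 : min (t + 1) T = t + 1 := min_eq_left (by omega)
    have hm2 : min (t + 2) T = t + 2 := min_eq_left (by omega)
    rw [hm1, hm2, aw_shift_sum1 (t + 2) (by omega), show t + 2 - 1 = t + 1 from by omega]
    refine Finset.sum_congr rfl fun k hk => ?_
    rw [Finset.mem_Icc] at hk
    rw [show t + 2 - (k + 1) = t + 1 - k from by omega, ← hmid k (by omega) (by omega)]

lemma aw_keyA {n : ℕ} (A : Matrix (Fin n) (Fin n) ℝ) (τ t : ℕ) (d : ℕ → Fin n → ℝ) :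
    A.mulVec (d t)
      + A.mulVec (∑ k ∈ Finset.Icc 2 (min (τ + 1) (t + 1)), (A ^ (k - 1)).mulVec (d (t + 1 - k)))
    = (∑ k ∈ Finset.Icc 2 (min (τ + 1) (t + 2)), (A ^ (k - 1)).mulVec (d (t + 2 - k)))
      + (if τ ≤ t then (A ^ (τ + 1)).mulVec (d (t - τ)) else 0) := by
  have hgen : A.mulVec (d t)
      + A.mulVec (∑ k ∈ Finset.Icc 2 (min (τ + 1) (t + 1)), (A ^ (k - 1)).mulVec (d (t + 1 - k)))
      = ∑ k ∈ Finset.Icc 2 (min (τ + 1) (t + 1) + 1), (A ^ (k - 1)).mulVec (d (t + 2 - k)) := by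
    rw [aw_mulVec_finsum]
    simp only [Matrix.mulVec_mulVec]
    rw [aw_shift_sum1 (min (τ + 1) (t + 1) + 1) (by omega)]
    simp only [Nat.add_sub_cancel]
    have e0 : ∀ k ∈ Finset.Icc 1 (min (τ + 1) (t + 1)),
        (A ^ k).mulVec (d (t + 2 - (k + 1))) = (A ^ k).mulVec (d (t + 1 - k)) := by
      intro k hk
      rw [show t + 2 - (k + 1) = t + 1 - k from by omega]
    rw [Finset.sum_congr rfl e0, aw_insert_Icc (min (τ + 1) (t + 1)) (by omega),
      Finset.sum_insert (show (1 : ℕ) ∉ Finset.Icc 2 (min (τ + 1) (t + 1)) by simp)]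
    have e3 : (A ^ 1).mulVec (d (t + 1 - 1)) = A.mulVec (d t) := by
      rw [pow_one]; norm_num
    rw [e3]
    congr 1
    refine Finset.sum_congr rfl fun k hk => ?_
    rw [Finset.mem_Icc] at hk
    have e4 : A * A ^ (k - 1) = A ^ k := by
      rw [← pow_succ']
      congr 1
      omega
    rw [e4]
  rw [hgen]
  rcases le_or_gt τ t with hc | hc
  · have hm1 : min (τ + 1) (t + 1) + 1 = τ + 1 + 1 := by
      rw [min_eq_left (by omega)]
    have hm2 : min (τ + 1) (t + 2) = τ + 1 := by omega
    rw [hm1, hm2, if_pos hc, Finset.sum_Icc_succ_top (by omega),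
      show τ + 1 + 1 - 1 = τ + 1 from by omega, show t + 2 - (τ + 1 + 1) = t - τ from by omega]
  · have hm1 : min (τ + 1) (t + 1) + 1 = t + 2 := by omega
    have hm2 : min (τ + 1) (t + 2) = t + 2 := by omega
    rw [hm1, hm2, if_neg (by omega), add_zero]

/-- Anti-windup finite-gain ℓ∞ stability of the saturated closed
loop. Under the hypotheses of the augmented anti-windup closed loop and
`‖A^{τ+1}‖ < 1`, for every bounded disturbance `w` the internal state
satisfies `sup_t ‖ŵ_t‖ ≤ (1/(1 − ‖A^{τ+1}‖))·sup_t ‖w_t‖` and the state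
satisfies the affine bound
`sup_t ‖x_t‖ ≤ Σ_{i=1}^N (η_i − η_{i−1})‖[Rⁱ_T ⋯ Rⁱ_1]‖
  + (Σ_{k=0}^τ ‖A^k‖)·(1/(1 − ‖A^{τ+1}‖))·sup_t ‖w_t‖`. -/
theorem antiwindup_finite_gain_stability (n m T N τ : ℕ) (hT : 1 ≤ T) (hN : 1 ≤ N)
    (A : Matrix (Fin n) (Fin n) ℝ) (B : Matrix (Fin n) (Fin m) ℝ)
    (η : ℕ → ℝ) (hη0 : η 0 = 0) (hmono : ∀ i : ℕ, i < N → η i ≤ η (i + 1))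
    (R : ℕ → ℕ → Matrix (Fin n) (Fin n) ℝ) (M : ℕ → ℕ → Matrix (Fin m) (Fin n) ℝ)
    (hSLS : ∀ i ∈ Finset.Icc 1 N, SLSFeasible A B T (R i) (M i))
    (umax : ℝ)
    (hsafe : ∑ i ∈ Finset.Icc 1 N, (η i - η (i - 1)) * concatNorm T (M i) ≤ umax)
    (hA : linftyNorm (A ^ (τ + 1)) < 1)
    (w x wHat : ℕ → Fin n → ℝ) (u : ℕ → Fin m → ℝ)
    (hx0 : x 0 = w 0)
    (hx : ∀ t : ℕ, 1 ≤ t →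
      x t = A.mulVec (x (t - 1)) + B.mulVec (satProj umax (u (t - 1))) + w t)
    (hu : ∀ t : ℕ, u t = blendOut M η N T wHat t)
    (hwh0 : wHat 0 = x 0)
    (hwh : ∀ t : ℕ, wHat (t + 1) = x (t + 1) -
      augXmap R A η N T τ (fun j => if j = t + 1 then 0 else wHat j) (t + 1))
    (hbdd : BddAbove (Set.range fun t => ‖w t‖)) :
    (∀ t : ℕ, ‖wHat t‖ ≤
      (1 / (1 - linftyNorm (A ^ (τ + 1)))) * ⨆ s : ℕ, ‖w s‖) ∧
    (∀ t : ℕ, ‖x t‖ ≤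
      (∑ i ∈ Finset.Icc 1 N, (η i - η (i - 1)) * concatNorm T (R i)) +
      (∑ k ∈ Finset.range (τ + 1), linftyNorm (A ^ k)) *
        ((1 / (1 - linftyNorm (A ^ (τ + 1)))) * ⨆ s : ℕ, ‖w s‖)) := by
  classical
  set ρ := linftyNorm (A ^ (τ + 1)) with hρdef
  have hρ0 : 0 ≤ ρ := by rw [hρdef]; exact aw_linftyNorm_nonneg _
  have h1ρ : 0 < 1 - ρ := by linarith
  set W := ⨆ s : ℕ, ‖w s‖ with hWdef
  have hW0 : 0 ≤ W := by rw [hWdef]; exact Real.iSup_nonneg fun s => norm_nonneg _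
  have hwle : ∀ s, ‖w s‖ ≤ W := by
    intro s; rw [hWdef]; exact le_ciSup hbdd s
  set C := 1 / (1 - ρ) * W with hCdef
  have hC0 : 0 ≤ C := by rw [hCdef]; positivity
  have hWC : W ≤ C := by
    have h1 : (1 : ℝ) ≤ 1 / (1 - ρ) := by
      rw [le_div_iff₀ h1ρ]; linarith
    calc W = 1 * W := (one_mul W).symm
      _ ≤ 1 / (1 - ρ) * W := mul_le_mul_of_nonneg_right h1 hW0
      _ = C := hCdef.symm
  -- η facts
  have hstep : ∀ i, 1 ≤ i → i ≤ N → η (i - 1) ≤ η i := by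
    intro i h1 h2
    have := hmono (i - 1) (by omega)
    rwa [show i - 1 + 1 = i from by omega] at this
  have hηnn : ∀ i, i ≤ N → 0 ≤ η i := by
    intro i
    induction i with
    | zero => intro _; rw [hη0]
    | succ j ih =>
      intro hj
      exact le_trans (ih (by omega)) (hmono j (by omega))
  -- abbreviations
  set d : ℕ → Fin n → ℝ := fun s => wHat s - satProj (η N) (wHat s) with hddef
  set SR : ℕ → Fin n → ℝ := fun t => ∑ i ∈ Finset.Icc 1 N, ∑ k ∈ Finset.Icc 2 (min (t + 1) T),
    (R i k).mulVec (satProj (η i) (wHat (t + 1 - k)) - satProj (η (i - 1)) (wHat (t + 1 - k)))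
    with hSRdef
  set SA : ℕ → Fin n → ℝ := fun t => ∑ k ∈ Finset.Icc 2 (min (τ + 1) (t + 1)),
    (A ^ (k - 1)).mulVec (d (t + 1 - k)) with hSAdef
  -- the masked augmented map equals SR + SA
  have hmask : ∀ t : ℕ, augXmap R A η N T τ (fun j => if j = t + 1 then 0 else wHat j) (t + 1)
      = SR (t + 1) + SA (t + 1) := by
    intro t
    unfold augXmap
    have hB : blendOut R η N T (fun j => if j = t + 1 then 0 else wHat j) (t + 1)
        = SR (t + 1) := by
      unfold blendOut
      simp only [hSRdef]
      refine Finset.sum_congr rfl fun i _ => ?_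
      rw [aw_insert_Icc (min (t + 1 + 1) T) (by omega),
        Finset.sum_insert (show (1 : ℕ) ∉ Finset.Icc 2 (min (t + 1 + 1) T) by simp)]
      have hterm : (R i 1).mulVec
          (satProj (η i) ((fun j => if j = t + 1 then 0 else wHat j) (t + 1 + 1 - 1))
            - satProj (η (i - 1)) ((fun j => if j = t + 1 then 0 else wHat j) (t + 1 + 1 - 1)))
          = 0 := by
        simp [aw_satProj_zero]
      rw [hterm, zero_add]
      refine Finset.sum_congr rfl fun k hk => ?_
      rw [Finset.mem_Icc] at hk
      rw [if_neg (show ¬(t + 1 + 1 - k = t + 1) from by omega)]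
    have hA2 : (∑ k ∈ Finset.Icc 1 (min (τ + 1) (t + 1 + 1)),
        (A ^ (k - 1)).mulVec ((fun j => if j = t + 1 then 0 else wHat j) (t + 1 + 1 - k)
          - satProj (η N) ((fun j => if j = t + 1 then 0 else wHat j) (t + 1 + 1 - k))))
        = SA (t + 1) := by
      simp only [hSAdef, hddef]
      rw [aw_insert_Icc (min (τ + 1) (t + 1 + 1)) (by omega),
        Finset.sum_insert (show (1 : ℕ) ∉ Finset.Icc 2 (min (τ + 1) (t + 1 + 1)) by simp)]
      have hterm : (A ^ (1 - 1)).mulVec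
          ((fun j => if j = t + 1 then 0 else wHat j) (t + 1 + 1 - 1)
            - satProj (η N) ((fun j => if j = t + 1 then 0 else wHat j) (t + 1 + 1 - 1)))
          = 0 := by
        simp [aw_satProj_zero]
      rw [hterm, zero_add]
      refine Finset.sum_congr rfl fun k hk => ?_
      rw [Finset.mem_Icc] at hk
      rw [if_neg (show ¬(t + 1 + 1 - k = t + 1) from by omega)]
    rw [hB, hA2]
  -- state decomposition
  have hX : ∀ t, x t = wHat t + (SR t + SA t) := by
    intro t
    cases t with
    | zero =>
      have h1 : SR 0 = 0 := by
        simp only [hSRdef]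
        rw [show min (0 + 1) T = 1 from by omega,
          Finset.Icc_eq_empty (show ¬(2 : ℕ) ≤ 1 by omega)]
        simp
      have h2 : SA 0 = 0 := by
        simp only [hSAdef]
        rw [show min (τ + 1) (0 + 1) = 1 from by omega,
          Finset.Icc_eq_empty (show ¬(2 : ℕ) ≤ 1 by omega)]
        simp
      rw [h1, h2, hwh0]
      simp
    | succ t =>
      rw [hwh t, hmask t]
      abel
  -- input never saturates
  have hΔb : ∀ i, 1 ≤ i → i ≤ N → ∀ (s : ℕ) (j : Fin n),
      |(satProj (η i) (wHat s) - satProj (η (i - 1)) (wHat s)) j| ≤ η i - η (i - 1) := by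
    intro i h1 h2 s j
    have := aw_abs_sat_sub_sat (hηnn (i - 1) (by omega)) (hstep i h1 h2) (wHat s j)
    simpa [satProj] using this
  have hnosat : ∀ t, satProj umax (u t) = u t := by
    intro t
    funext r
    show satScalar umax (u t r) = u t r
    apply aw_sat_of_le
    rw [hu t]
    unfold blendOut
    rw [Finset.sum_apply]
    refine le_trans (Finset.abs_sum_le_sum_abs _ _)
      (le_trans (Finset.sum_le_sum fun i hi => ?_) hsafe)
    rw [Finset.mem_Icc] at hi
    rw [Finset.sum_apply]
    have hd0 : 0 ≤ η i - η (i - 1) := sub_nonneg.2 (hstep i hi.1 hi.2)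
    refine le_trans (Finset.abs_sum_le_sum_abs _ _) ?_
    calc ∑ k ∈ Finset.Icc 1 (min (t + 1) T),
          |(M i k).mulVec (satProj (η i) (wHat (t + 1 - k))
            - satProj (η (i - 1)) (wHat (t + 1 - k))) r|
        ≤ ∑ k ∈ Finset.Icc 1 (min (t + 1) T), (∑ j, |M i k r j|) * (η i - η (i - 1)) :=
          Finset.sum_le_sum fun k _ =>
            aw_mulVec_coord_le _ _ _ (fun j => hΔb i hi.1 hi.2 _ j) r
      _ ≤ ∑ k ∈ Finset.Icc 1 T, (∑ j, |M i k r j|) * (η i - η (i - 1)) :=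
          Finset.sum_le_sum_of_subset_of_nonneg
            (Finset.Icc_subset_Icc_right (min_le_right _ _))
            (fun k _ _ => mul_nonneg (Finset.sum_nonneg fun j _ => abs_nonneg _) hd0)
      _ = (∑ k ∈ Finset.Icc 1 T, ∑ j, |M i k r j|) * (η i - η (i - 1)) := by
          rw [Finset.sum_mul]
      _ ≤ concatNorm T (M i) * (η i - η (i - 1)) :=
          mul_le_mul_of_nonneg_right (aw_concat_rowsum_le T (M i) r) hd0
      _ = (η i - η (i - 1)) * concatNorm T (M i) := mul_comm _ _
  -- the key recursion
  have hrec : ∀ t, wHat (t + 1)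
      = w (t + 1) + (if τ ≤ t then (A ^ (τ + 1)).mulVec (d (t - τ)) else 0) := by
    intro t
    set tl := if τ ≤ t then (A ^ (τ + 1)).mulVec (d (t - τ)) else 0 with htl
    set Δs := ∑ i ∈ Finset.Icc 1 N,
      (satProj (η i) (wHat t) - satProj (η (i - 1)) (wHat t)) with hΔs
    set bl := blendOut M η N T wHat t with hbl
    have ht : wHat t = Δs + d t := by
      rw [hΔs, aw_telescope (fun i => satProj (η i) (wHat t)) N, hη0, aw_satProj_level_zero,
        sub_zero]
      simp only [hddef]
      abel
    have hRkey : A.mulVec Δs + A.mulVec (SR t) + B.mulVec bl = SR (t + 1) := by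
      simp only [hΔs, hbl, hSRdef]
      unfold blendOut
      rw [aw_mulVec_finsum, aw_mulVec_finsum, aw_mulVec_finsum, ← Finset.sum_add_distrib,
        ← Finset.sum_add_distrib]
      rw [show t + 1 + 1 = t + 2 from rfl]
      refine Finset.sum_congr rfl fun i hi => ?_
      obtain ⟨h1, hmid, hlast⟩ := hSLS i hi
      exact aw_keyR A B T hT (R i) (M i) h1 hmid hlast t
        (fun s => satProj (η i) (wHat s) - satProj (η (i - 1)) (wHat s))
    have hAkey : A.mulVec (d t) + A.mulVec (SA t) = SA (t + 1) + tl := by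
      simp only [hSAdef, htl]
      rw [show t + 1 + 1 = t + 2 from rfl]
      exact aw_keyA A τ t d
    calc wHat (t + 1) = x (t + 1) - (SR (t + 1) + SA (t + 1)) := by
          rw [hX (t + 1)]; abel
      _ = A.mulVec (x t) + B.mulVec (satProj umax (u t)) + w (t + 1)
          - (SR (t + 1) + SA (t + 1)) := by
          rw [hx (t + 1) (by omega)]
          norm_num
      _ = A.mulVec (Δs + d t + (SR t + SA t)) + B.mulVec bl + w (t + 1)
          - (SR (t + 1) + SA (t + 1)) := by
          rw [hnosat t, hu t, hX t, ht, ← hbl]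
      _ = (A.mulVec Δs + A.mulVec (SR t) + B.mulVec bl)
          + (A.mulVec (d t) + A.mulVec (SA t)) + w (t + 1)
          - (SR (t + 1) + SA (t + 1)) := by
          simp only [Matrix.mulVec_add]
          abel
      _ = SR (t + 1) + (SA (t + 1) + tl) + w (t + 1) - (SR (t + 1) + SA (t + 1)) := by
          rw [hRkey, hAkey]
      _ = w (t + 1) + tl := by abel
  -- bound on d
  have hdb : ∀ s, ‖d s‖ ≤ ‖wHat s‖ := by
    intro s
    refine (pi_norm_le_iff_of_nonneg (norm_nonneg _)).2 fun j => ?_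
    have he : d s j = wHat s j - satScalar (η N) (wHat s j) := rfl
    rw [Real.norm_eq_abs, he]
    calc |wHat s j - satScalar (η N) (wHat s j)| ≤ |wHat s j| :=
          aw_abs_sub_sat (hηnn N le_rfl) _
      _ ≤ ‖wHat s‖ := by
          rw [← Real.norm_eq_abs]; exact norm_le_pi_norm _ j
  -- bound on wHat
  have hwhb : ∀ t, ‖wHat t‖ ≤ C := by
    intro t
    induction t using Nat.strong_induction_on with
    | _ t ih =>
      cases t with
      | zero =>
        rw [hwh0, hx0]
        exact (hwle 0).trans hWC
      | succ s =>
        rw [hrec s]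
        by_cases hcs : τ ≤ s
        · rw [if_pos hcs]
          have h2 : ‖(A ^ (τ + 1)).mulVec (d (s - τ))‖ ≤ ρ * ‖d (s - τ)‖ := by
            rw [hρdef]; exact aw_norm_mulVec_le _ _
          have h4 : ‖wHat (s - τ)‖ ≤ C := ih (s - τ) (by omega)
          have h5 : ρ * ‖d (s - τ)‖ ≤ ρ * C :=
            mul_le_mul_of_nonneg_left ((hdb _).trans h4) hρ0
          have h6 : ‖w (s + 1) + (A ^ (τ + 1)).mulVec (d (s - τ))‖ ≤ W + ρ * C :=
            (norm_add_le _ _).trans (add_le_add (hwle _) (h2.trans h5))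
          refine h6.trans ?_
          have he : W + ρ * C = C := by
            have hne : (1 : ℝ) - ρ ≠ 0 := ne_of_gt h1ρ
            rw [hCdef]
            field_simp
            ring
          linarith [he]
        · rw [if_neg hcs, add_zero]
          exact (hwle _).trans hWC
  -- bound on SR
  have hSRnn : 0 ≤ ∑ i ∈ Finset.Icc 1 N, (η i - η (i - 1)) * concatNorm T (R i) := by
    refine Finset.sum_nonneg fun i hi => ?_
    rw [Finset.mem_Icc] at hi
    exact mul_nonneg (sub_nonneg.2 (hstep i hi.1 hi.2)) (aw_concatNorm_nonneg _ _)
  have hSRb : ∀ t, ‖SR t‖ ≤ ∑ i ∈ Finset.Icc 1 N, (η i - η (i - 1)) * concatNorm T (R i) := by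
    intro t
    refine (pi_norm_le_iff_of_nonneg hSRnn).2 fun r => ?_
    rw [Real.norm_eq_abs]
    simp only [hSRdef]
    rw [Finset.sum_apply]
    refine le_trans (Finset.abs_sum_le_sum_abs _ _) (Finset.sum_le_sum fun i hi => ?_)
    rw [Finset.mem_Icc] at hi
    rw [Finset.sum_apply]
    have hd0 : 0 ≤ η i - η (i - 1) := sub_nonneg.2 (hstep i hi.1 hi.2)
    refine le_trans (Finset.abs_sum_le_sum_abs _ _) ?_
    calc ∑ k ∈ Finset.Icc 2 (min (t + 1) T),
          |(R i k).mulVec (satProj (η i) (wHat (t + 1 - k))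
            - satProj (η (i - 1)) (wHat (t + 1 - k))) r|
        ≤ ∑ k ∈ Finset.Icc 2 (min (t + 1) T), (∑ j, |R i k r j|) * (η i - η (i - 1)) :=
          Finset.sum_le_sum fun k _ =>
            aw_mulVec_coord_le _ _ _ (fun j => hΔb i hi.1 hi.2 _ j) r
      _ ≤ ∑ k ∈ Finset.Icc 1 T, (∑ j, |R i k r j|) * (η i - η (i - 1)) :=
          Finset.sum_le_sum_of_subset_of_nonneg
            (Finset.Icc_subset_Icc (by omega) (min_le_right _ _))
            (fun k _ _ => mul_nonneg (Finset.sum_nonneg fun j _ => abs_nonneg _) hd0)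
      _ = (∑ k ∈ Finset.Icc 1 T, ∑ j, |R i k r j|) * (η i - η (i - 1)) := by
          rw [Finset.sum_mul]
      _ ≤ concatNorm T (R i) * (η i - η (i - 1)) :=
          mul_le_mul_of_nonneg_right (aw_concat_rowsum_le T (R i) r) hd0
      _ = (η i - η (i - 1)) * concatNorm T (R i) := mul_comm _ _
  -- bound on x
  have hxb : ∀ t, ‖x t‖ ≤ (∑ i ∈ Finset.Icc 1 N, (η i - η (i - 1)) * concatNorm T (R i))
      + (∑ k ∈ Finset.range (τ + 1), linftyNorm (A ^ k)) * C := by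
    intro t
    rw [hX t, show wHat t + (SR t + SA t) = SR t + (wHat t + SA t) from by abel]
    refine (norm_add_le _ _).trans (add_le_add (hSRb t) ?_)
    have h1 : ‖wHat t‖ ≤ linftyNorm (A ^ 0) * C := by
      have he : wHat t = (A ^ 0).mulVec (wHat t) := by rw [pow_zero, Matrix.one_mulVec]
      calc ‖wHat t‖ = ‖(A ^ 0).mulVec (wHat t)‖ := by rw [← he]
        _ ≤ linftyNorm (A ^ 0) * ‖wHat t‖ := aw_norm_mulVec_le _ _
        _ ≤ linftyNorm (A ^ 0) * C :=
          mul_le_mul_of_nonneg_left (hwhb t) (aw_linftyNorm_nonneg _)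
    have h2 : ‖SA t‖ ≤ ∑ k ∈ Finset.Icc 2 (τ + 1), linftyNorm (A ^ (k - 1)) * C := by
      simp only [hSAdef]
      refine (norm_sum_le _ _).trans ?_
      refine le_trans (Finset.sum_le_sum fun k _ => (aw_norm_mulVec_le _ _).trans
        (mul_le_mul_of_nonneg_left ((hdb _).trans (hwhb _)) (aw_linftyNorm_nonneg _))) ?_
      refine Finset.sum_le_sum_of_subset_of_nonneg
        (Finset.Icc_subset_Icc_right (min_le_left _ _)) ?_
      exact fun k _ _ => mul_nonneg (aw_linftyNorm_nonneg _) hC0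
    have h3 : linftyNorm (A ^ 0) * C + ∑ k ∈ Finset.Icc 2 (τ + 1), linftyNorm (A ^ (k - 1)) * C
        = (∑ k ∈ Finset.range (τ + 1), linftyNorm (A ^ k)) * C := by
      rw [Finset.sum_mul, aw_shift_sum1 (τ + 1) (by omega), show τ + 1 - 1 = τ from by omega]
      simp only [Nat.add_sub_cancel]
      rw [show Finset.range (τ + 1) = Finset.Icc 0 τ from by ext k; simp,
        show Finset.Icc 0 τ = insert 0 (Finset.Icc 1 τ) from by
          ext k; simp only [Finset.mem_Icc, Finset.mem_insert]; omega,
        Finset.sum_insert (show (0 : ℕ) ∉ Finset.Icc 1 τ by simp)]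
    calc ‖wHat t + SA t‖ ≤ ‖wHat t‖ + ‖SA t‖ := norm_add_le _ _
      _ ≤ linftyNorm (A ^ 0) * C
          + ∑ k ∈ Finset.Icc 2 (τ + 1), linftyNorm (A ^ (k - 1)) * C := add_le_add h1 h2
      _ = (∑ k ∈ Finset.range (τ + 1), linftyNorm (A ^ k)) * C := h3
  exact ⟨hwhb, hxb⟩
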